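/- Assume 0 < α_NH ≤ α_H, β ≥ 0, and that every item v ∈ Ω satisfies ‖v‖ < (1/6)·(√(‖u0‖² + 12(α_NH + β)/(5 n d α_H)) − ‖u0‖). Then for every recommendation policy π ∈ 𝔓 there exists a unique stationary profile ū(π) ∈ ℝ^d, i.e. a unique solution of u = F(π,u); moreover, for any starting point ū^0 ∈ ℝ^d the iterates ū^{ℓ+1} = F(π,ū^ℓ) converge to ū(π), and satisfy ‖ū(π) − ū^ℓ‖ ≤ L^ℓ · ‖ū(π) − ū^0‖ for every ℓ ∈ ℕ, where L < 1 is a constant independent of π. -/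

import Mathlib

open Finset
open scoped RealInnerProductSpace

noncomputable section

/-- User/item profile space: `ℝ^d` with the Euclidean norm. -/
abbrev Vec (d : ℕ) := EuclideanSpace ℝ (Fin d)

/-- MNL score of item `v` under user profile `u`: `s_v(u) = exp(⟨v,u⟩)`. -/
def score {d : ℕ} {ι : Type} (V : ι → Vec d) (u : Vec d) (v : ι) : ℝ :=
  Real.exp ⟪V v, u⟫

/-- Total score of a set of items: `s_A(u) = ∑_{v∈A} s_v(u)`. -/
def sSet {d : ℕ} {ι : Type} (V : ι → Vec d) (u : Vec d) (A : Finset ι) : ℝ :=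
  ∑ v ∈ A, score V u v

/-- MNL click function `g(x) = x/(x+c)`. -/
def gfun (c x : ℝ) : ℝ := x / (x + c)

/-- Probability that the user selects item `v`, conditional on recommended set `E`. -/
def pvE {d : ℕ} {ι : Type} [Fintype ι] [DecidableEq ι]
    (V : ι → Vec d) (c : ℝ) (u : Vec d) (E : Finset ι) (v : ι) : ℝ :=
  if E = ∅ then score V u v / sSet V u Finset.univ
  else if v ∈ E then
    score V u v / sSet V u E * gfun c (sSet V u E)
      + score V u v / sSet V u Finset.univ * (1 - gfun c (sSet V u E))
  else score V u v / sSet V u Finset.univ * (1 - gfun c (sSet V u E))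

/-- Unconditional probability that the user selects item `v` under policy `π`:
`p_v(π,u) = ∑_{C∈𝒞} p_C ∑_{E⊆C} p_{E|C} p_{v|E}(u)`. -/
def pv {d : ℕ} {ι : Type} [Fintype ι] [DecidableEq ι]
    (V : ι → Vec d) (c : ℝ) (cand : Finset (Finset ι)) (pC : Finset ι → ℝ)
    (π : Finset ι → Finset ι → ℝ) (u : Vec d) (v : ι) : ℝ :=
  ∑ C ∈ cand, pC C * (∑ E ∈ C.powerset, π C E * pvE V c u E v)

/-- The fixed-point map
`F(π,u) = (β u0 + ∑_v α_v p_v(π,u) v) / (β + ∑_v α_v p_v(π,u))`. -/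
def Fmap {d : ℕ} {ι : Type} [Fintype ι] [DecidableEq ι]
    (V : ι → Vec d) (c : ℝ) (cand : Finset (Finset ι)) (pC : Finset ι → ℝ)
    (α : ι → ℝ) (β : ℝ) (u0 : Vec d)
    (π : Finset ι → Finset ι → ℝ) (u : Vec d) : Vec d :=
  (β + ∑ v, α v * pv V c cand pC π u v)⁻¹ •
    (β • u0 + ∑ v, (α v * pv V c cand pC π u v) • V v)

/-- A recommendation policy: for each candidate set `C ∈ 𝒞`, a probability
distribution over subsets `E ⊆ C`. -/
def ValidPolicy {ι : Type} [DecidableEq ι] (cand : Finset (Finset ι))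
    (π : Finset ι → Finset ι → ℝ) : Prop :=
  ∀ C ∈ cand, (∀ E ∈ C.powerset, 0 ≤ π C E) ∧ (∑ E ∈ C.powerset, π C E) = 1
section AuxStmt6

variable {d : ℕ} {ι : Type} [Fintype ι] [DecidableEq ι]

lemma score_pos' (V : ι → Vec d) (u : Vec d) (v : ι) : 0 < score V u v := Real.exp_pos _

lemma sSet_nonneg' (V : ι → Vec d) (u : Vec d) (A : Finset ι) : 0 ≤ sSet V u A :=
  Finset.sum_nonneg fun v _ => (score_pos' V u v).le

lemma sSet_pos' (V : ι → Vec d) (u : Vec d) {A : Finset ι} (hA : A.Nonempty) :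
    0 < sSet V u A :=
  Finset.sum_pos (fun v _ => score_pos' V u v) hA

lemma score_le_sSet' (V : ι → Vec d) (u : Vec d) {A : Finset ι} {v : ι} (hv : v ∈ A) :
    score V u v ≤ sSet V u A :=
  Finset.single_le_sum (fun w _ => (score_pos' V u w).le) hv

lemma hasFDerivAt_score' (V : ι → Vec d) (u : Vec d) (v : ι) :
    HasFDerivAt (fun u => score V u v)
      ((score V u v) • (innerSL ℝ (V v) : Vec d →L[ℝ] ℝ)) u := by
  have h1 : HasFDerivAt (fun u : Vec d => ⟪V v, u⟫) (innerSL ℝ (V v) : Vec d →L[ℝ] ℝ) u :=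
    (innerSL ℝ (V v)).hasFDerivAt
  simpa [score] using h1.exp

/-- derivative of `u ↦ sSet V u A`. -/
def sDeriv (V : ι → Vec d) (u : Vec d) (A : Finset ι) : Vec d →L[ℝ] ℝ :=
  ∑ w ∈ A, score V u w • (innerSL ℝ (V w) : Vec d →L[ℝ] ℝ)

lemma hasFDerivAt_sSet' (V : ι → Vec d) (u : Vec d) (A : Finset ι) :
    HasFDerivAt (fun u => sSet V u A) (sDeriv V u A) u :=
  HasFDerivAt.fun_sum fun w _ => hasFDerivAt_score' V u w

lemma abs_sDeriv_apply_le' (V : ι → Vec d) (u : Vec d) (A : Finset ι) {M : ℝ}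
    (hM : ∀ w, ‖V w‖ ≤ M) (h : Vec d) :
    |sDeriv V u A h| ≤ sSet V u A * (M * ‖h‖) := by
  have he : sDeriv V u A h = ∑ w ∈ A, score V u w * ⟪V w, h⟫ := by
    simp [sDeriv]
  rw [he, sSet, Finset.sum_mul]
  refine (Finset.abs_sum_le_sum_abs _ _).trans (Finset.sum_le_sum fun w _ => ?_)
  rw [abs_mul, abs_of_pos (score_pos' V u w)]
  refine mul_le_mul_of_nonneg_left ?_ (score_pos' V u w).le
  exact (abs_real_inner_le_norm _ _).trans
    (mul_le_mul_of_nonneg_right (hM w) (norm_nonneg h))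

end AuxStmt6
section AuxStmt6b
set_option linter.unusedSectionVars false

variable {d : ℕ} {ι : Type} [Fintype ι] [DecidableEq ι]

lemma ratio_deriv' (V : ι → Vec d) (u : Vec d) {A : Finset ι} {v : ι} (hv : v ∈ A)
    {M : ℝ} (hM : ∀ w, ‖V w‖ ≤ M) :
    ∃ f' : Vec d →L[ℝ] ℝ, HasFDerivAt (fun u => score V u v / sSet V u A) f' u ∧
      ∀ h, |f' h| ≤ 2 * M * ‖h‖ := by
  have hM0 : 0 ≤ M := (norm_nonneg (V v)).trans (hM v)
  have hA : (0:ℝ) < sSet V u A := sSet_pos' V u ⟨v, hv⟩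
  have hinv : HasFDerivAt (fun u => (sSet V u A)⁻¹)
      ((-(sSet V u A ^ 2)⁻¹) • sDeriv V u A) u :=
    (hasDerivAt_inv hA.ne').comp_hasFDerivAt u (hasFDerivAt_sSet' V u A)
  have hd := (hasFDerivAt_score' V u v).fun_mul hinv
  refine ⟨_, by simpa only [div_eq_mul_inv] using hd, fun h => ?_⟩
  have hap : (score V u v • ((-(sSet V u A ^ 2)⁻¹) • sDeriv V u A)
        + (sSet V u A)⁻¹ • (score V u v • (innerSL ℝ (V v) : Vec d →L[ℝ] ℝ))) h
      = score V u v * ((-(sSet V u A ^ 2)⁻¹) * sDeriv V u A h)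
        + (sSet V u A)⁻¹ * (score V u v * ⟪V v, h⟫) := by
    simp
  rw [hap]
  have h1 : |sDeriv V u A h| ≤ sSet V u A * (M * ‖h‖) := abs_sDeriv_apply_le' V u A hM h
  have h2 : |⟪V v, h⟫| ≤ M * ‖h‖ := (abs_real_inner_le_norm _ _).trans
    (mul_le_mul_of_nonneg_right (hM v) (norm_nonneg h))
  have hsv : 0 < score V u v := score_pos' V u v
  have hsle : score V u v ≤ sSet V u A := score_le_sSet' V u hv
  refine (abs_add_le _ _).trans ?_
  have e1 : |score V u v * ((-(sSet V u A ^ 2)⁻¹) * sDeriv V u A h)|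
      = score V u v * ((sSet V u A ^ 2)⁻¹ * |sDeriv V u A h|) := by
    rw [abs_mul, abs_mul, abs_of_pos hsv, abs_neg, abs_of_pos (by positivity : (0:ℝ) < (sSet V u A ^ 2)⁻¹)]
  have e2 : |(sSet V u A)⁻¹ * (score V u v * ⟪V v, h⟫)|
      = (sSet V u A)⁻¹ * (score V u v * |⟪V v, h⟫|) := by
    rw [abs_mul, abs_mul, abs_of_pos (inv_pos.2 hA), abs_of_pos hsv]
  rw [e1, e2]
  have b1 : score V u v * ((sSet V u A ^ 2)⁻¹ * |sDeriv V u A h|) ≤ M * ‖h‖ := by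
    have : score V u v * ((sSet V u A ^ 2)⁻¹ * |sDeriv V u A h|)
        ≤ sSet V u A * ((sSet V u A ^ 2)⁻¹ * (sSet V u A * (M * ‖h‖))) := by
      have := abs_nonneg (sDeriv V u A h)
      gcongr
    calc score V u v * ((sSet V u A ^ 2)⁻¹ * |sDeriv V u A h|)
        ≤ sSet V u A * ((sSet V u A ^ 2)⁻¹ * (sSet V u A * (M * ‖h‖))) := this
      _ = M * ‖h‖ := by field_simp
  have b2 : (sSet V u A)⁻¹ * (score V u v * |⟪V v, h⟫|) ≤ M * ‖h‖ := by
    have : (sSet V u A)⁻¹ * (score V u v * |⟪V v, h⟫|)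
        ≤ (sSet V u A)⁻¹ * (sSet V u A * (M * ‖h‖)) := by
      have := abs_nonneg (⟪V v, h⟫ : ℝ)
      gcongr
    calc (sSet V u A)⁻¹ * (score V u v * |⟪V v, h⟫|)
        ≤ (sSet V u A)⁻¹ * (sSet V u A * (M * ‖h‖)) := this
      _ = M * ‖h‖ := by field_simp
  linarith

lemma gfun_nonneg' {c s : ℝ} (hc : 0 < c) (hs : 0 ≤ s) : 0 ≤ gfun c s := by
  unfold gfun; positivity

lemma gfun_le_one' {c s : ℝ} (hc : 0 < c) (hs : 0 ≤ s) : gfun c s ≤ 1 := by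
  unfold gfun
  rw [div_le_one (by positivity)]
  linarith

lemma gfun_deriv' (V : ι → Vec d) {c : ℝ} (hc : 0 < c) (u : Vec d) (E : Finset ι)
    {M : ℝ} (hM : ∀ w, ‖V w‖ ≤ M) (hM0 : 0 ≤ M) :
    ∃ g' : Vec d →L[ℝ] ℝ, HasFDerivAt (fun u => gfun c (sSet V u E)) g' u ∧
      ∀ h, |g' h| ≤ M / 4 * ‖h‖ := by
  set s := sSet V u E with hs
  have hs0 : 0 ≤ s := sSet_nonneg' V u E
  have hsc : (0:ℝ) < s + c := by linarith
  have hg : HasDerivAt (gfun c) ((1 * (s + c) - s * 1) / (s + c) ^ 2) s := by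
    have := (hasDerivAt_id s).div ((hasDerivAt_id s).add_const c) hsc.ne'
    exact (by simpa [Pi.div_def] using this :
      HasDerivAt (fun x => x / (x + c)) ((1 * (s + c) - s * 1) / (s + c) ^ 2) s)
  have hd := hg.comp_hasFDerivAt u (hasFDerivAt_sSet' V u E)
  refine ⟨_, hd, fun h => ?_⟩
  have hap : (((1 * (s + c) - s * 1) / (s + c) ^ 2) • sDeriv V u E h)
      = ((c) / (s + c) ^ 2) * sDeriv V u E h := by
    rw [smul_eq_mul]; ring
  show |((1 * (s + c) - s * 1) / (s + c) ^ 2) • sDeriv V u E h| ≤ M / 4 * ‖h‖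
  rw [hap]
  have h1 : |sDeriv V u E h| ≤ s * (M * ‖h‖) := abs_sDeriv_apply_le' V u E hM h
  rw [abs_mul, abs_of_pos (by positivity : (0:ℝ) < c / (s + c) ^ 2)]
  have key : c / (s + c) ^ 2 * (s * (M * ‖h‖)) ≤ M / 4 * ‖h‖ := by
    rw [div_mul_eq_mul_div, div_le_iff₀ (by positivity)]
    have h4 : 4 * (c * s) ≤ (s + c) ^ 2 := by nlinarith [sq_nonneg (s - c)]
    nlinarith [norm_nonneg h, mul_nonneg hM0 (norm_nonneg h), mul_nonneg (mul_nonneg hM0 (norm_nonneg h)) (mul_nonneg hc.le hs0)]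
  calc c / (s + c) ^ 2 * |sDeriv V u E h| ≤ c / (s + c) ^ 2 * (s * (M * ‖h‖)) := by gcongr
    _ ≤ M / 4 * ‖h‖ := key

end AuxStmt6b
section AuxStmt6c
set_option linter.unusedSectionVars false

variable {d : ℕ} {ι : Type} [Fintype ι] [DecidableEq ι] [Nonempty ι]

lemma pvE_nonneg' (V : ι → Vec d) {c : ℝ} (hc : 0 < c) (u : Vec d) (E : Finset ι) (v : ι) :
    0 ≤ pvE V c u E v := by
  have hU : (0:ℝ) < sSet V u Finset.univ := sSet_pos' V u Finset.univ_nonempty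
  unfold pvE
  have h2 : 0 ≤ score V u v / sSet V u Finset.univ :=
    div_nonneg (score_pos' V u v).le hU.le
  split_ifs with hE hv
  · exact h2
  · have hE' : (0:ℝ) < sSet V u E := sSet_pos' V u ⟨v, hv⟩
    have hg0 := gfun_nonneg' hc (sSet_nonneg' V u E)
    have hg1 := gfun_le_one' hc (sSet_nonneg' V u E)
    have h1 : 0 ≤ score V u v / sSet V u E :=
      div_nonneg (score_pos' V u v).le hE'.le
    nlinarith
  · have hg1 := gfun_le_one' hc (sSet_nonneg' V u E)
    nlinarith

lemma sum_pvE' (V : ι → Vec d) {c : ℝ} (hc : 0 < c) (u : Vec d) (E : Finset ι) :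
    ∑ v, pvE V c u E v = 1 := by
  have hU : (0:ℝ) < sSet V u Finset.univ := sSet_pos' V u Finset.univ_nonempty
  by_cases hE : E = ∅
  · subst hE
    have key : ∀ v : ι, pvE V c u ∅ v = score V u v / sSet V u Finset.univ := by
      intro v; simp [pvE]
    rw [Finset.sum_congr rfl fun v _ => key v, ← Finset.sum_div]
    have : (∑ i : ι, score V u i) = sSet V u Finset.univ := rfl
    rw [this]
    exact div_self hU.ne'
  · have hEne : E.Nonempty := Finset.nonempty_iff_ne_empty.2 hE
    have hsE : (0:ℝ) < sSet V u E := sSet_pos' V u hEne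
    have key : ∀ v : ι, pvE V c u E v
        = score V u v / sSet V u Finset.univ * (1 - gfun c (sSet V u E))
          + (if v ∈ E then score V u v / sSet V u E * gfun c (sSet V u E) else 0) := by
      intro v
      by_cases hv : v ∈ E <;> simp [pvE, hE, hv] <;> ring
    rw [Finset.sum_congr rfl fun v _ => key v, Finset.sum_add_distrib]
    have h1 : ∑ v, score V u v / sSet V u Finset.univ * (1 - gfun c (sSet V u E))
        = (1 - gfun c (sSet V u E)) := by
      rw [← Finset.sum_mul, ← Finset.sum_div]
      have : (∑ i : ι, score V u i) = sSet V u Finset.univ := rfl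
      rw [this, div_self hU.ne', one_mul]
    have h2 : (∑ v, if v ∈ E then score V u v / sSet V u E * gfun c (sSet V u E) else 0)
        = gfun c (sSet V u E) := by
      rw [Finset.sum_ite_mem, Finset.univ_inter, ← Finset.sum_mul, ← Finset.sum_div]
      have : (∑ i ∈ E, score V u i) = sSet V u E := rfl
      rw [this, div_self hsE.ne', one_mul]
    rw [h1, h2]; ring

lemma pvE_deriv' (V : ι → Vec d) {c : ℝ} (hc : 0 < c) (u : Vec d) (E : Finset ι) (v : ι)
    {M : ℝ} (hM : ∀ w, ‖V w‖ ≤ M) (hM0 : 0 ≤ M) :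
    ∃ p' : Vec d →L[ℝ] ℝ, HasFDerivAt (fun u => pvE V c u E v) p' u ∧
      ∀ h, |p' h| ≤ 9 / 2 * M * ‖h‖ := by
  have hU : (0:ℝ) < sSet V u Finset.univ := sSet_pos' V u Finset.univ_nonempty
  by_cases hE : E = ∅
  · obtain ⟨f', hf', hb⟩ := ratio_deriv' V u (Finset.mem_univ v) hM
    refine ⟨f', by simpa only [pvE, hE, if_pos rfl, ↓reduceIte] using hf', fun h => ?_⟩
    have := hb h
    nlinarith [norm_nonneg h, mul_nonneg hM0 (norm_nonneg h)]
  · -- common part : rU * (1 - g)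
    obtain ⟨rU', hrU', hbU⟩ := ratio_deriv' V u (Finset.mem_univ v) hM
    obtain ⟨g', hg', hbg⟩ := gfun_deriv' V hc u E hM hM0
    have hrU01 : 0 ≤ score V u v / sSet V u Finset.univ ∧
        score V u v / sSet V u Finset.univ ≤ 1 := by
      constructor
      · exact div_nonneg (score_pos' V u v).le hU.le
      · rw [div_le_one hU]; exact score_le_sSet' V u (Finset.mem_univ v)
    have hg01 : 0 ≤ gfun c (sSet V u E) ∧ gfun c (sSet V u E) ≤ 1 :=
      ⟨gfun_nonneg' hc (sSet_nonneg' V u E), gfun_le_one' hc (sSet_nonneg' V u E)⟩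
    have hone : HasFDerivAt (fun u : Vec d => 1 - gfun c (sSet V u E)) (-g') u := by
      simpa using hg'.const_sub 1
    have hcommon := hrU'.mul hone  -- wrong order? need (fun u => rU u * (1 - g u))
    -- hcommon : HasFDerivAt (fun u => rU u * (1-g u)) (rU u • (-g') + (1-g u) • rU') u
    by_cases hv : v ∈ E
    · have hsE : (0:ℝ) < sSet V u E := sSet_pos' V u ⟨v, hv⟩
      obtain ⟨rE', hrE', hbE⟩ := ratio_deriv' V u hv hM
      have hrE01 : 0 ≤ score V u v / sSet V u E ∧ score V u v / sSet V u E ≤ 1 := by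
        constructor
        · exact div_nonneg (score_pos' V u v).le hsE.le
        · rw [div_le_one hsE]; exact score_le_sSet' V u hv
      have hterm1 := hrE'.mul hg'
      have hfull := hterm1.add hcommon
      refine ⟨(score V u v / sSet V u E) • g' + gfun c (sSet V u E) • rE'
        + ((score V u v / sSet V u Finset.univ) • (-g')
          + (1 - gfun c (sSet V u E)) • rU'), ?_, fun h => ?_⟩
      · have : (fun u => score V u v / sSet V u E * gfun c (sSet V u E)
            + score V u v / sSet V u Finset.univ * (1 - gfun c (sSet V u E)))
            = fun u => pvE V c u E v := by
          funext u'; simp [pvE, hE, hv]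
        rw [← this]; exact hfull
      · have hap : ((score V u v / sSet V u E) • g' + gfun c (sSet V u E) • rE'
            + ((score V u v / sSet V u Finset.univ) • (-g')
              + (1 - gfun c (sSet V u E)) • rU')) h
            = (score V u v / sSet V u E) * g' h + gfun c (sSet V u E) * rE' h
              + ((score V u v / sSet V u Finset.univ) * (-(g' h))
                + (1 - gfun c (sSet V u E)) * rU' h) := by simp
        rw [hap]
        have b1 := hbg h; have b2 := hbE h; have b3 := hbU h
        have a1 : |(score V u v / sSet V u E) * g' h| ≤ M / 4 * ‖h‖ := by
          rw [abs_mul, abs_of_nonneg hrE01.1]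
          calc (score V u v / sSet V u E) * |g' h| ≤ 1 * (M / 4 * ‖h‖) := by
                apply mul_le_mul hrE01.2 b1 (abs_nonneg _) zero_le_one
            _ = M / 4 * ‖h‖ := one_mul _
        have a2 : |gfun c (sSet V u E) * rE' h| ≤ 2 * M * ‖h‖ := by
          rw [abs_mul, abs_of_nonneg hg01.1]
          calc gfun c (sSet V u E) * |rE' h| ≤ 1 * (2 * M * ‖h‖) := by
                apply mul_le_mul hg01.2 b2 (abs_nonneg _) zero_le_one
            _ = 2 * M * ‖h‖ := one_mul _
        have a3 : |(score V u v / sSet V u Finset.univ) * (-(g' h))| ≤ M / 4 * ‖h‖ := by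
          rw [abs_mul, abs_neg, abs_of_nonneg hrU01.1]
          calc (score V u v / sSet V u Finset.univ) * |g' h| ≤ 1 * (M / 4 * ‖h‖) := by
                apply mul_le_mul hrU01.2 b1 (abs_nonneg _) zero_le_one
            _ = M / 4 * ‖h‖ := one_mul _
        have a4 : |(1 - gfun c (sSet V u E)) * rU' h| ≤ 2 * M * ‖h‖ := by
          rw [abs_mul]
          have : |1 - gfun c (sSet V u E)| ≤ 1 := by
            rw [abs_of_nonneg (by linarith [hg01.2])]; linarith [hg01.1]
          calc |1 - gfun c (sSet V u E)| * |rU' h| ≤ 1 * (2 * M * ‖h‖) := by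
                apply mul_le_mul this b3 (abs_nonneg _) zero_le_one
            _ = 2 * M * ‖h‖ := one_mul _
        calc |(score V u v / sSet V u E) * g' h + gfun c (sSet V u E) * rE' h
              + ((score V u v / sSet V u Finset.univ) * (-(g' h))
                + (1 - gfun c (sSet V u E)) * rU' h)|
            ≤ |(score V u v / sSet V u E) * g' h| + |gfun c (sSet V u E) * rE' h|
              + (|(score V u v / sSet V u Finset.univ) * (-(g' h))|
                + |(1 - gfun c (sSet V u E)) * rU' h|) := by
              refine (abs_add_le _ _).trans ?_
              gcongr <;> [skip; exact abs_add_le _ _]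
              exact abs_add_le _ _
          _ ≤ 9 / 2 * M * ‖h‖ := by linarith
    · refine ⟨(score V u v / sSet V u Finset.univ) • (-g')
          + (1 - gfun c (sSet V u E)) • rU', ?_, fun h => ?_⟩
      · have : (fun u => score V u v / sSet V u Finset.univ * (1 - gfun c (sSet V u E)))
            = fun u => pvE V c u E v := by
          funext u'; simp [pvE, hE, hv]
        rw [← this]; exact hcommon
      · have hap : ((score V u v / sSet V u Finset.univ) • (-g')
            + (1 - gfun c (sSet V u E)) • rU') h
            = (score V u v / sSet V u Finset.univ) * (-(g' h))
              + (1 - gfun c (sSet V u E)) * rU' h := by simp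
        rw [hap]
        have b1 := hbg h; have b3 := hbU h
        have a3 : |(score V u v / sSet V u Finset.univ) * (-(g' h))| ≤ M / 4 * ‖h‖ := by
          rw [abs_mul, abs_neg, abs_of_nonneg hrU01.1]
          calc (score V u v / sSet V u Finset.univ) * |g' h| ≤ 1 * (M / 4 * ‖h‖) := by
                apply mul_le_mul hrU01.2 b1 (abs_nonneg _) zero_le_one
            _ = M / 4 * ‖h‖ := one_mul _
        have a4 : |(1 - gfun c (sSet V u E)) * rU' h| ≤ 2 * M * ‖h‖ := by
          rw [abs_mul]
          have : |1 - gfun c (sSet V u E)| ≤ 1 := by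
            rw [abs_of_nonneg (by linarith [hg01.2])]; linarith [hg01.1]
          calc |1 - gfun c (sSet V u E)| * |rU' h| ≤ 1 * (2 * M * ‖h‖) := by
                apply mul_le_mul this b3 (abs_nonneg _) zero_le_one
            _ = 2 * M * ‖h‖ := one_mul _
        refine (abs_add_le _ _).trans ?_
        nlinarith [norm_nonneg h, mul_nonneg hM0 (norm_nonneg h)]

end AuxStmt6c
section AuxStmt6d
set_option linter.unusedSectionVars false

variable {d : ℕ} {ι : Type} [Fintype ι] [DecidableEq ι] [Nonempty ι]

lemma pv_nonneg' (V : ι → Vec d) {c : ℝ} (hc : 0 < c)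
    (cand : Finset (Finset ι)) (pC : Finset ι → ℝ) (hpC0 : ∀ C ∈ cand, 0 ≤ pC C)
    {π : Finset ι → Finset ι → ℝ} (hπ : ValidPolicy cand π) (u : Vec d) (v : ι) :
    0 ≤ pv V c cand pC π u v := by
  refine Finset.sum_nonneg fun C hC => mul_nonneg (hpC0 C hC) ?_
  exact Finset.sum_nonneg fun E hE =>
    mul_nonneg ((hπ C hC).1 E hE) (pvE_nonneg' V hc u E v)

lemma sum_pv' (V : ι → Vec d) {c : ℝ} (hc : 0 < c)
    (cand : Finset (Finset ι)) (pC : Finset ι → ℝ)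
    (hpC1 : (∑ C ∈ cand, pC C) = 1)
    {π : Finset ι → Finset ι → ℝ} (hπ : ValidPolicy cand π) (u : Vec d) :
    ∑ v, pv V c cand pC π u v = 1 := by
  unfold pv
  rw [Finset.sum_comm]
  have : ∀ C ∈ cand, ∑ v, pC C * (∑ E ∈ C.powerset, π C E * pvE V c u E v) = pC C := by
    intro C hC
    rw [← Finset.mul_sum, Finset.sum_comm]
    have : ∀ E ∈ C.powerset, ∑ v, π C E * pvE V c u E v = π C E := by
      intro E hE
      rw [← Finset.mul_sum, sum_pvE' V hc u E, mul_one]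
    rw [Finset.sum_congr rfl this, (hπ C hC).2, mul_one]
  rw [Finset.sum_congr rfl this, hpC1]

lemma pv_deriv' (V : ι → Vec d) {c : ℝ} (hc : 0 < c)
    (cand : Finset (Finset ι)) (pC : Finset ι → ℝ) (hpC0 : ∀ C ∈ cand, 0 ≤ pC C)
    (hpC1 : (∑ C ∈ cand, pC C) = 1)
    {π : Finset ι → Finset ι → ℝ} (hπ : ValidPolicy cand π) (u : Vec d) (v : ι)
    {M : ℝ} (hM : ∀ w, ‖V w‖ ≤ M) (hM0 : 0 ≤ M) :
    ∃ P' : Vec d →L[ℝ] ℝ, HasFDerivAt (fun u => pv V c cand pC π u v) P' u ∧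
      ∀ h, |P' h| ≤ 9 / 2 * M * ‖h‖ := by
  choose p' hp' hpb using fun E : Finset ι => pvE_deriv' V hc u E v hM hM0
  refine ⟨∑ C ∈ cand, pC C • ∑ E ∈ C.powerset, π C E • p' E, ?_, fun h => ?_⟩
  · unfold pv
    exact HasFDerivAt.fun_sum fun C _ =>
      (HasFDerivAt.fun_sum fun E _ => (hp' E).const_mul (π C E)).const_mul (pC C)
  · have hap : (∑ C ∈ cand, pC C • ∑ E ∈ C.powerset, π C E • p' E) h
        = ∑ C ∈ cand, pC C * ∑ E ∈ C.powerset, π C E * p' E h := by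
      simp [ContinuousLinearMap.sum_apply]
    rw [hap]
    calc |∑ C ∈ cand, pC C * ∑ E ∈ C.powerset, π C E * p' E h|
        ≤ ∑ C ∈ cand, |pC C * ∑ E ∈ C.powerset, π C E * p' E h| :=
          Finset.abs_sum_le_sum_abs _ _
      _ ≤ ∑ C ∈ cand, pC C * (9 / 2 * M * ‖h‖) := by
          refine Finset.sum_le_sum fun C hC => ?_
          rw [abs_mul, abs_of_nonneg (hpC0 C hC)]
          refine mul_le_mul_of_nonneg_left ?_ (hpC0 C hC)
          calc |∑ E ∈ C.powerset, π C E * p' E h|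
              ≤ ∑ E ∈ C.powerset, |π C E * p' E h| := Finset.abs_sum_le_sum_abs _ _
            _ ≤ ∑ E ∈ C.powerset, π C E * (9 / 2 * M * ‖h‖) := by
                refine Finset.sum_le_sum fun E hE => ?_
                rw [abs_mul, abs_of_nonneg ((hπ C hC).1 E hE)]
                exact mul_le_mul_of_nonneg_left (hpb E h) ((hπ C hC).1 E hE)
            _ = 9 / 2 * M * ‖h‖ := by rw [← Finset.sum_mul, (hπ C hC).2, one_mul]
      _ = 9 / 2 * M * ‖h‖ := by rw [← Finset.sum_mul, hpC1, one_mul]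

end AuxStmt6d
section AuxStmt6e
set_option linter.unusedSectionVars false

variable {d : ℕ} {ι : Type} [Fintype ι] [DecidableEq ι] [Nonempty ι]

set_option maxHeartbeats 1000000 in
lemma Fmap_deriv' (V : ι → Vec d) {c : ℝ} (hc : 0 < c)
    (cand : Finset (Finset ι)) (pC : Finset ι → ℝ) (hpC0 : ∀ C ∈ cand, 0 ≤ pC C)
    (hpC1 : (∑ C ∈ cand, pC C) = 1)
    (α : ι → ℝ) {αH αNH : ℝ} (hαNH : 0 < αNH)
    (hα1 : ∀ v, αNH ≤ α v) (hα2 : ∀ v, α v ≤ αH)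
    {β : ℝ} (hβ : 0 ≤ β) (u0 : Vec d)
    {π : Finset ι → Finset ι → ℝ} (hπ : ValidPolicy cand π) (u : Vec d)
    {M : ℝ} (hM : ∀ w, ‖V w‖ ≤ M) (hM0 : 0 ≤ M) :
    ∃ Φ' : Vec d →L[ℝ] Vec d,
      HasFDerivAt (Fmap V c cand pC α β u0 π) Φ' u ∧
      ‖Φ'‖ ≤ 9 / 2 * (Fintype.card ι : ℝ) * αH * M * (2 * M + ‖u0‖) / (αNH + β) := by
  classical
  set n : ℝ := (Fintype.card ι : ℝ) with hn
  have hαH : 0 < αH := lt_of_lt_of_le hαNH ((hα1 (Classical.arbitrary ι)).trans (hα2 _))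
  choose P' hP hPb using fun v : ι => pv_deriv' V hc cand pC hpC0 hpC1 hπ u v hM hM0
  set Du : ℝ := β + ∑ v, α v * pv V c cand pC π u v with hDu
  have hpv0 : ∀ v, 0 ≤ pv V c cand pC π u v := fun v =>
    pv_nonneg' V hc cand pC hpC0 hπ u v
  have hDlb : αNH + β ≤ Du := by
    have h1 : ∑ v, αNH * pv V c cand pC π u v ≤ ∑ v, α v * pv V c cand pC π u v :=
      Finset.sum_le_sum fun v _ => mul_le_mul_of_nonneg_right (hα1 v) (hpv0 v)
    have h2 : ∑ v, αNH * pv V c cand pC π u v = αNH := by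
      rw [← Finset.mul_sum, sum_pv' V hc cand pC hpC1 hπ u, mul_one]
    rw [hDu]; linarith [h1, h2.symm ▸ h1]
  have hDpos : 0 < Du := lt_of_lt_of_le (by linarith) hDlb
  -- derivative of the denominator
  have hD' : HasFDerivAt (fun u => β + ∑ v, α v * pv V c cand pC π u v)
      (∑ v, α v • P' v) u :=
    (HasFDerivAt.fun_sum fun v _ => (hP v).const_mul (α v)).const_add β
  -- derivative of the numerator
  have hN' : HasFDerivAt (fun u => β • u0 + ∑ v, (α v * pv V c cand pC π u v) • V v)
      (∑ v, ((α v) • P' v).smulRight (V v)) u :=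
    (HasFDerivAt.fun_sum fun v _ => ((hP v).const_mul (α v)).smul_const (V v)).const_add (β • u0)
  have hinv : HasFDerivAt (fun u => (β + ∑ v, α v * pv V c cand pC π u v)⁻¹)
      ((-(Du ^ 2)⁻¹) • ∑ v, α v • P' v) u :=
    (hasDerivAt_inv hDpos.ne').comp_hasFDerivAt u hD'
  have hΦ := hinv.smul hN'
  refine ⟨_, hΦ, ?_⟩
  refine ContinuousLinearMap.opNorm_le_bound _ (by positivity) fun h => ?_
  set X : ℝ := n * (αH * (9 / 2 * M * ‖h‖)) with hX
  have hXnn : 0 ≤ X := by positivity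
  have hterm : ∀ v : ι, |α v * P' v h| ≤ αH * (9 / 2 * M * ‖h‖) := by
    intro v
    rw [abs_mul, abs_of_pos (lt_of_lt_of_le hαNH (hα1 v))]
    exact mul_le_mul (hα2 v) (hPb v h) (abs_nonneg _) hαH.le
  have hNu : ‖β • u0 + ∑ v, (α v * pv V c cand pC π u v) • V v‖ ≤ Du * (‖u0‖ + M) := by
    refine (norm_add_le _ _).trans ?_
    have h1 : ‖β • u0‖ = β * ‖u0‖ := by rw [norm_smul, Real.norm_eq_abs, abs_of_nonneg hβ]
    have h2 : ‖∑ v, (α v * pv V c cand pC π u v) • V v‖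
        ≤ ∑ v, (α v * pv V c cand pC π u v) * M := by
      refine (norm_sum_le _ _).trans (Finset.sum_le_sum fun v _ => ?_)
      rw [norm_smul, Real.norm_eq_abs,
        abs_of_nonneg (mul_nonneg (le_of_lt (lt_of_lt_of_le hαNH (hα1 v))) (hpv0 v))]
      exact mul_le_mul_of_nonneg_left (hM v) (mul_nonneg (le_of_lt (lt_of_lt_of_le hαNH (hα1 v))) (hpv0 v))
    have h3 : ∑ v, (α v * pv V c cand pC π u v) * M
        = (∑ v, α v * pv V c cand pC π u v) * M := by rw [Finset.sum_mul]
    have h4 : 0 ≤ ∑ v, α v * pv V c cand pC π u v :=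
      Finset.sum_nonneg fun v _ =>
        mul_nonneg (le_of_lt (lt_of_lt_of_le hαNH (hα1 v))) (hpv0 v)
    rw [h1]
    have := h2.trans_eq h3
    nlinarith [norm_nonneg u0]
  have hD'h : |(∑ v, α v • P' v) h| ≤ X := by
    have hap : (∑ v, α v • P' v) h = ∑ v, α v * P' v h := by
      simp [ContinuousLinearMap.sum_apply]
    rw [hap, hX]
    calc |∑ v, α v * P' v h| ≤ ∑ v, |α v * P' v h| := Finset.abs_sum_le_sum_abs _ _
      _ ≤ ∑ _v : ι, αH * (9 / 2 * M * ‖h‖) := Finset.sum_le_sum fun v _ => hterm v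
      _ = n * (αH * (9 / 2 * M * ‖h‖)) := by
          rw [Finset.sum_const, Finset.card_univ, nsmul_eq_mul]
  have hN'h : ‖(∑ v, ((α v) • P' v).smulRight (V v)) h‖ ≤ X * M := by
    have hap : (∑ v, ((α v) • P' v).smulRight (V v)) h = ∑ v, (α v * P' v h) • V v := by
      simp [ContinuousLinearMap.sum_apply]
    rw [hap]
    calc ‖∑ v, (α v * P' v h) • V v‖ ≤ ∑ v, ‖(α v * P' v h) • V v‖ := norm_sum_le _ _
      _ ≤ ∑ _v : ι, αH * (9 / 2 * M * ‖h‖) * M := by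
          refine Finset.sum_le_sum fun v _ => ?_
          rw [norm_smul, Real.norm_eq_abs]
          exact mul_le_mul (hterm v) (hM v) (norm_nonneg _)
            (mul_nonneg hαH.le (by positivity))
      _ = X * M := by
          rw [Finset.sum_const, Finset.card_univ, nsmul_eq_mul, hX]; ring
  -- assemble
  have happ : (Du⁻¹ • (∑ v, ((α v) • P' v).smulRight (V v))
      + ((-(Du ^ 2)⁻¹) • ∑ v, α v • P' v).smulRight
          (β • u0 + ∑ v, (α v * pv V c cand pC π u v) • V v)) h
      = Du⁻¹ • ((∑ v, ((α v) • P' v).smulRight (V v)) h)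
        + ((-(Du ^ 2)⁻¹) * ((∑ v, α v • P' v) h)) •
            (β • u0 + ∑ v, (α v * pv V c cand pC π u v) • V v) := by
    simp
  rw [happ]
  have hb : ‖Du⁻¹ • ((∑ v, ((α v) • P' v).smulRight (V v)) h)
        + ((-(Du ^ 2)⁻¹) * ((∑ v, α v • P' v) h)) •
            (β • u0 + ∑ v, (α v * pv V c cand pC π u v) • V v)‖
      ≤ Du⁻¹ * (X * M) + (Du ^ 2)⁻¹ * X * (Du * (‖u0‖ + M)) := by
    refine (norm_add_le _ _).trans ?_
    have b1 : ‖Du⁻¹ • ((∑ v, ((α v) • P' v).smulRight (V v)) h)‖ ≤ Du⁻¹ * (X * M) := by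
      rw [norm_smul, Real.norm_eq_abs, abs_of_pos (inv_pos.2 hDpos)]
      exact mul_le_mul_of_nonneg_left hN'h (inv_pos.2 hDpos).le
    have b2 : ‖((-(Du ^ 2)⁻¹) * ((∑ v, α v • P' v) h)) •
          (β • u0 + ∑ v, (α v * pv V c cand pC π u v) • V v)‖
        ≤ (Du ^ 2)⁻¹ * X * (Du * (‖u0‖ + M)) := by
      rw [norm_smul, Real.norm_eq_abs, abs_mul, abs_neg,
        abs_of_pos (inv_pos.2 (by positivity : (0:ℝ) < Du ^ 2))]
      have : (Du ^ 2)⁻¹ * |(∑ v, α v • P' v) h| ≤ (Du ^ 2)⁻¹ * X :=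
        mul_le_mul_of_nonneg_left hD'h (by positivity)
      exact mul_le_mul this hNu (norm_nonneg _) (by positivity)
    linarith
  refine hb.trans ?_
  have heq : Du⁻¹ * (X * M) + (Du ^ 2)⁻¹ * X * (Du * (‖u0‖ + M))
      = X * (2 * M + ‖u0‖) / Du := by
    field_simp
    ring
  rw [heq]
  have hmono : X * (2 * M + ‖u0‖) / Du ≤ X * (2 * M + ‖u0‖) / (αNH + β) := by
    apply div_le_div_of_nonneg_left (by positivity) (by linarith) hDlb
  refine hmono.trans (le_of_eq ?_)
  rw [hX]
  field_simp

end AuxStmt6e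
set_option maxHeartbeats 2000000 in
/-- Under the hypotheses of Theorem 2 (`0 < α_NH ≤ α_H`, `β ≥ 0`, and
`‖v‖ < (1/6)(√(‖u0‖² + 12(α_NH+β)/(5 n d α_H)) − ‖u0‖)` for all items `v`), for every
policy `π` there exists a unique stationary profile `ū(π)`, i.e. a unique solution of
`u = F(π,u)`; moreover, from any starting point `ū⁰` the iterates `ū^{ℓ+1} = F(π,ū^ℓ)`
converge to `ū(π)` and satisfy `‖ū(π) − ū^ℓ‖ ≤ L^ℓ ‖ū(π) − ū⁰‖`, with `L < 1`
independent of `π`. -/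
theorem stmt6 {d : ℕ} {ι : Type} [Fintype ι] [DecidableEq ι] [Nonempty ι]
    (V : ι → Vec d) (hV : Function.Injective V)
    (Hset : Finset ι) (c : ℝ) (hc : 0 < c)
    (αH αNH : ℝ) (hαNH : 0 < αNH) (hαHNH : αNH ≤ αH) (β : ℝ) (hβ : 0 ≤ β)
    (u0 : Vec d)
    (cand : Finset (Finset ι)) (hcand : ∀ C ∈ cand, Disjoint C Hset)
    (pC : Finset ι → ℝ) (hpC0 : ∀ C ∈ cand, 0 ≤ pC C)
    (hpC1 : (∑ C ∈ cand, pC C) = 1)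
    (hnorm : ∀ v : ι, ‖V v‖ < (1/6) * (Real.sqrt (‖u0‖^2
        + 12 * (αNH + β) / (5 * (Fintype.card ι : ℝ) * (d : ℝ) * αH)) - ‖u0‖)) :
    ∃ L : ℝ, L < 1 ∧
      ∀ π : Finset ι → Finset ι → ℝ, ValidPolicy cand π →
        ∃ ubar : Vec d,
          Fmap V c cand pC (fun v => if v ∈ Hset then αH else αNH) β u0 π ubar = ubar ∧
          (∀ u : Vec d,
            Fmap V c cand pC (fun v => if v ∈ Hset then αH else αNH) β u0 π u = u →
            u = ubar) ∧
          ∀ w : Vec d,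
            Filter.Tendsto
              (fun ℓ : ℕ =>
                (Fmap V c cand pC (fun v => if v ∈ Hset then αH else αNH) β u0 π)^[ℓ] w)
              Filter.atTop (nhds ubar) ∧
            ∀ ℓ : ℕ,
              ‖ubar -
                (Fmap V c cand pC (fun v => if v ∈ Hset then αH else αNH) β u0 π)^[ℓ] w‖
                ≤ L ^ ℓ * ‖ubar - w‖ := by
  classical
  rcases Nat.eq_zero_or_pos d with hd0 | hdpos
  · exfalso
    subst hd0
    obtain ⟨v0⟩ := ‹Nonempty ι›
    have h := hnorm v0
    simp only [Nat.cast_zero, mul_zero, zero_mul, div_zero, add_zero,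
      Real.sqrt_sq (norm_nonneg u0), sub_self] at h
    exact absurd h (not_lt.2 (by positivity))
  · obtain ⟨v0⟩ := ‹Nonempty ι›
    set α : ι → ℝ := fun v => if v ∈ Hset then αH else αNH with hαdef
    have hα1 : ∀ v, αNH ≤ α v := fun v => by
      by_cases h : v ∈ Hset <;> simp [hαdef, h, hαHNH, le_refl]
    have hα2 : ∀ v, α v ≤ αH := fun v => by
      by_cases h : v ∈ Hset <;> simp [hαdef, h, hαHNH, le_refl]
    have hαH : 0 < αH := lt_of_lt_of_le hαNH hαHNH
    set M : ℝ := Finset.univ.sup' Finset.univ_nonempty fun v : ι => ‖V v‖ with hMdef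
    have hM : ∀ w : ι, ‖V w‖ ≤ M := fun w => by
      rw [hMdef]; exact Finset.le_sup' (fun v : ι => ‖V v‖) (Finset.mem_univ w)
    have hM0 : 0 ≤ M := (norm_nonneg (V v0)).trans (hM v0)
    set n : ℝ := (Fintype.card ι : ℝ) with hn
    have hn1 : 1 ≤ n := by
      rw [hn]; exact_mod_cast Fintype.card_pos
    have hd1 : 1 ≤ (d : ℝ) := by exact_mod_cast hdpos
    have hden : 0 < 5 * n * (d : ℝ) * αH :=
      mul_pos (mul_pos (mul_pos (by norm_num : (0:ℝ) < 5) (by linarith)) (by linarith)) hαH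
    set L : ℝ := 9 / 2 * n * αH * M * (2 * M + ‖u0‖) / (αNH + β) with hL
    have hαβ : 0 < αNH + β := by linarith
    have hL0 : 0 ≤ L := by
      rw [hL]
      have h1 : 0 ≤ 9 / 2 * n * αH * M * (2 * M + ‖u0‖) := by
        have : (0:ℝ) ≤ n := by linarith
        have h2 : 0 ≤ 2 * M + ‖u0‖ := by positivity
        positivity
      positivity
    -- L < 1
    have hMlt : M < 1 / 6 * (Real.sqrt (‖u0‖ ^ 2
        + 12 * (αNH + β) / (5 * n * (d : ℝ) * αH)) - ‖u0‖) := by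
      rw [hMdef]
      rw [Finset.sup'_lt_iff]
      exact fun v _ => hnorm v
    set K0 : ℝ := 12 * (αNH + β) / (5 * n * (d : ℝ) * αH) with hK0def
    have hK0 : 0 < K0 := by
      rw [hK0def]; exact div_pos (by linarith) hden
    have hsqrtnn : 0 ≤ Real.sqrt (‖u0‖ ^ 2 + K0) := Real.sqrt_nonneg _
    have hsq : Real.sqrt (‖u0‖ ^ 2 + K0) ^ 2 = ‖u0‖ ^ 2 + K0 :=
      Real.sq_sqrt (by positivity)
    have h6 : 6 * M + ‖u0‖ < Real.sqrt (‖u0‖ ^ 2 + K0) := by linarith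
    have hlt : (6 * M + ‖u0‖) ^ 2 < ‖u0‖ ^ 2 + K0 := by
      have h := mul_self_lt_mul_self (by positivity : (0:ℝ) ≤ 6 * M + ‖u0‖) h6
      calc (6 * M + ‖u0‖) ^ 2 = (6 * M + ‖u0‖) * (6 * M + ‖u0‖) := sq (6 * M + ‖u0‖)
        _ < Real.sqrt (‖u0‖ ^ 2 + K0) * Real.sqrt (‖u0‖ ^ 2 + K0) := h
        _ = Real.sqrt (‖u0‖ ^ 2 + K0) ^ 2 := (sq _).symm
        _ = ‖u0‖ ^ 2 + K0 := hsq
    have h12 : 36 * M ^ 2 + 12 * M * ‖u0‖ < K0 := by nlinarith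
    have h12' : (36 * M ^ 2 + 12 * M * ‖u0‖) * (5 * n * (d : ℝ) * αH)
        < 12 * (αNH + β) := by
      rw [hK0def, lt_div_iff₀ hden] at h12
      exact h12
    have hL1 : L < 1 := by
      rw [hL, div_lt_one hαβ]
      nlinarith [mul_nonneg (mul_nonneg (by linarith : (0:ℝ) ≤ (d:ℝ) - 1)
          (mul_nonneg (by linarith : (0:ℝ) ≤ n) hαH.le))
          (by nlinarith [hM0, norm_nonneg u0, sq_nonneg M] : (0:ℝ) ≤ 36 * M ^ 2 + 12 * M * ‖u0‖),
        mul_nonneg (mul_nonneg (by linarith : (0:ℝ) ≤ n) hαH.le) (sq_nonneg M),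
        mul_nonneg (mul_nonneg (mul_nonneg (by linarith : (0:ℝ) ≤ n) hαH.le) hM0)
          (norm_nonneg u0)]
    refine ⟨L, hL1, fun π hπ => ?_⟩
    set Φ := Fmap V c cand pC α β u0 π with hΦdef
    have hder : ∀ u : Vec d, ∃ Φ' : Vec d →L[ℝ] Vec d,
        HasFDerivAt Φ Φ' u ∧ ‖Φ'‖ ≤ L := by
      intro u
      obtain ⟨Φ', h1, h2⟩ := Fmap_deriv' V hc cand pC hpC0 hpC1 α hαNH hα1 hα2 hβ u0 hπ u hM hM0
      rw [← hn] at h2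
      exact ⟨Φ', h1, by rw [hL]; exact h2⟩
    choose Φ' hΦ' hΦb using hder
    set K : NNReal := Real.toNNReal L with hKdef
    have hKcoe : (K : ℝ) = L := Real.coe_toNNReal L hL0
    have hlip : LipschitzWith K Φ := by
      rw [← lipschitzOnWith_univ]
      refine Convex.lipschitzOnWith_of_nnnorm_hasFDerivWithin_le
        (fun x _ => (hΦ' x).hasFDerivWithinAt) (fun x _ => ?_) convex_univ
      rw [← NNReal.coe_le_coe, coe_nnnorm, hKcoe]
      exact hΦb x
    have hK1 : K < 1 := by
      rw [← NNReal.coe_lt_coe, hKcoe, NNReal.coe_one]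
      exact hL1
    have hcontr : ContractingWith K Φ := ⟨hK1, hlip⟩
    refine ⟨ContractingWith.fixedPoint Φ hcontr, hcontr.fixedPoint_isFixedPt, ?_, fun w => ⟨?_, fun ℓ => ?_⟩⟩
    · exact fun u hu => hcontr.fixedPoint_unique hu
    · exact hcontr.tendsto_iterate_fixedPoint w
    · have hfix : Φ^[ℓ] (ContractingWith.fixedPoint Φ hcontr)
          = ContractingWith.fixedPoint Φ hcontr :=
        Function.IsFixedPt.iterate hcontr.fixedPoint_isFixedPt ℓ
      have hd := (hlip.iterate ℓ).dist_le_mul (ContractingWith.fixedPoint Φ hcontr) w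
      rw [hfix, dist_eq_norm, dist_eq_norm] at hd
      calc ‖ContractingWith.fixedPoint Φ hcontr - Φ^[ℓ] w‖
          ≤ (K ^ ℓ : NNReal) * ‖ContractingWith.fixedPoint Φ hcontr - w‖ := hd
        _ = L ^ ℓ * ‖ContractingWith.fixedPoint Φ hcontr - w‖ := by
            rw [NNReal.coe_pow, hKcoe]

end
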